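/- If c > 0 and δ > 0 are constants such that E[(W_1 − c)^+] ≤ δ, then for every stopping time τ with respect to the filtration (F_n) satisfying E[τ] < ∞, one has E[max(M_τ, c)] ≤ δ·E[τ] + c; in particular E[M_τ] ≤ δ·E[τ] + c. -/

import Mathlib

open MeasureTheory ProbabilityTheory
open scoped ENNReal

/-- With `(W_n)_{n ≥ 1}` i.i.d. nonnegative integrable, `ℱ n = σ(W_1, …, W_n)`,
`M 0 = 0`, `M n = max_{1 ≤ k ≤ n} W k`: if `c > 0`, `δ > 0` and `E[(W_1 − c)⁺] ≤ δ`, then for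
every stopping time `τ` with `E[τ] < ∞` one has `E[max(M_τ, c)] ≤ δ·E[τ] + c`; in particular
`E[M_τ] ≤ δ·E[τ] + c`. -/
theorem maxIID_stoppedValue_le
    {Ω : Type*} {m : MeasurableSpace Ω} {P : Measure Ω} [IsProbabilityMeasure P]
    (W : ℕ → Ω → ℝ)
    (hW_meas : ∀ n, Measurable (W n))
    (hW_indep : iIndepFun (fun n : ℕ => W (n + 1)) P)
    (hW_ident : ∀ n, 1 ≤ n → IdentDistrib (W n) (W 1) P P)
    (hW_nonneg : ∀ n ω, 1 ≤ n → 0 ≤ W n ω)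
    (hW_int : ∀ n, 1 ≤ n → Integrable (W n) P)
    (ℱ : Filtration ℕ m)
    (hℱ : ∀ n, ℱ n = ⨆ i ∈ Set.Icc 1 n, MeasurableSpace.comap (W i) inferInstance)
    (M : ℕ → Ω → ℝ)
    (hM0 : M 0 = fun _ => 0)
    (hM : ∀ n, M (n + 1) = fun ω => max (M n ω) (W (n + 1) ω))
    (c δ : ℝ) (hc : 0 < c) (hδ : 0 < δ)
    (hWc : ∫ ω, max (W 1 ω - c) 0 ∂P ≤ δ) :
    ∀ τ : Ω → ℕ, IsStoppingTime ℱ (fun ω => (τ ω : WithTop ℕ)) → Integrable (fun ω => (τ ω : ℝ)) P →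
      (∫ ω, max (M (τ ω) ω) c ∂P ≤ δ * ∫ ω, (τ ω : ℝ) ∂P + c) ∧
      (∫ ω, M (τ ω) ω ∂P ≤ δ * ∫ ω, (τ ω : ℝ) ∂P + c) := by
  intro τ hτ hτint
  -- basic measurability
  have hτmeas : Measurable τ := by
    apply measurable_to_countable'
    intro n
    exact ℱ.le n _ (by simpa [Set.preimage, WithTop.coe_inj] using hτ.measurableSet_eq n)
  have hMmeas : ∀ n, Measurable (M n) := by
    intro n; induction n with
    | zero => rw [hM0]; exact measurable_const
    | succ n ih => rw [hM n]; exact ih.max (hW_meas (n+1))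
  have hMnonneg : ∀ n ω, 0 ≤ M n ω := by
    intro n; induction n with
    | zero => intro ω; simp [hM0]
    | succ n ih => intro ω; simp only [hM n]; exact le_max_of_le_left (ih ω)
  have hSV : Measurable (fun ω => M (τ ω) ω) := by
    have h1 : Measurable (fun p : Ω × ℕ => M p.2 p.1) :=
      measurable_from_prod_countable_left (fun n => hMmeas n)
    exact h1.comp (measurable_id.prodMk hτmeas)
  -- pointwise bound
  have key : ∀ n ω, max (M n ω) c ≤ c + ∑ k ∈ Finset.range n, max (W (k+1) ω - c) 0 := by
    intro n ω; induction n with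
    | zero => simp [hM0, max_eq_right hc.le]
    | succ n ih =>
      have hS : (0:ℝ) ≤ ∑ k ∈ Finset.range n, max (W (k+1) ω - c) 0 :=
        Finset.sum_nonneg fun k _ => le_max_right _ _
      have ht : (0:ℝ) ≤ max (W (n+1) ω - c) 0 := le_max_right _ _
      have htW : W (n+1) ω - c ≤ max (W (n+1) ω - c) 0 := le_max_left _ _
      have hMle : M n ω ≤ max (M n ω) c := le_max_left _ _
      simp only [hM n, Finset.sum_range_succ]
      refine max_le (max_le ?_ ?_) ?_ <;> linarith
  -- the sets {k < τ}
  set A : ℕ → Set Ω := fun k => {ω | k < τ ω} with hAdef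
  have hAmeas : ∀ k, MeasurableSet[ℱ k] (A k) := by
    intro k
    have h := (hτ.measurableSet_le k).compl
    have : A k = {ω | τ ω ≤ k}ᶜ := by
      ext ω; simp only [hAdef, Set.mem_setOf_eq, Set.mem_compl_iff, not_le]
    rw [this]; simpa [WithTop.coe_le_coe] using h
  have hAmeas' : ∀ k, MeasurableSet (A k) := fun k => ℱ.le k _ (hAmeas k)
  -- independence of ℱ k and σ(W (k+1))
  have hle : ∀ n : ℕ, MeasurableSpace.comap (W (n+1)) inferInstance ≤ m :=
    fun n => (hW_meas (n+1)).comap_le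
  have hre : ∀ k, (⨆ n ∈ Set.Iio k, MeasurableSpace.comap (W (n+1)) inferInstance) = ℱ k := by
    intro k; rw [hℱ k]
    apply le_antisymm
    · refine iSup₂_le fun n hn => ?_
      have hn' : n < k := hn
      exact le_biSup (f := fun i => MeasurableSpace.comap (W i) inferInstance)
        (Set.mem_Icc.2 ⟨Nat.succ_le_succ (Nat.zero_le n), hn'⟩)
    · refine iSup₂_le fun i hi => ?_
      obtain ⟨h1, h2⟩ := Set.mem_Icc.1 hi
      obtain ⟨j, rfl⟩ : ∃ j, i = j + 1 := ⟨i - 1, by omega⟩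
      exact le_biSup (f := fun n => MeasurableSpace.comap (W (n+1)) inferInstance)
        (Set.mem_Iio.2 (by omega))
  have hindep : ∀ k, Indep (ℱ k) (MeasurableSpace.comap (W (k+1)) inferInstance) P := by
    intro k
    have h := indep_iSup_of_disjoint (m := fun n : ℕ => MeasurableSpace.comap (W (n+1)) inferInstance)
      hle hW_indep (S := Set.Iio k) (T := {k})
      (Set.disjoint_singleton_right.2 (by simp))
    rw [hre k] at h
    simpa using h
  -- the ℝ≥0∞ machinery
  set φ : ℝ → ℝ≥0∞ := fun x => ENNReal.ofReal (max (x - c) 0) with hφdef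
  have hφ : Measurable φ := by
    apply ENNReal.measurable_ofReal.comp
    exact (measurable_id.sub measurable_const).max measurable_const
  set b : ℕ → Ω → ℝ≥0∞ := fun k ω => φ (W (k+1) ω) with hbdef
  set g : ℕ → Ω → ℝ≥0∞ :=
    fun k ω => (A k).indicator (fun _ => (1:ℝ≥0∞)) ω * b k ω with hgdef
  have hbmeas : ∀ k, Measurable (b k) := fun k => hφ.comp (hW_meas (k+1))
  have hgmeas : ∀ k, Measurable (g k) := fun k =>
    ((measurable_const.indicator (hAmeas' k))).mul (hbmeas k)
  -- E[(W1 - c)^+] as lintegral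
  have hf1int : Integrable (fun ω => max (W 1 ω - c) 0) P :=
    ((hW_int 1 le_rfl).sub (integrable_const c)).pos_part
  have hb1 : ∫⁻ ω, b 0 ω ∂P = ENNReal.ofReal (∫ ω, max (W 1 ω - c) 0 ∂P) := by
    rw [ofReal_integral_eq_lintegral_ofReal hf1int
      (Filter.Eventually.of_forall fun ω => le_max_right _ _)]
  have hbk : ∀ k, ∫⁻ ω, b k ω ∂P = ∫⁻ ω, b 0 ω ∂P := by
    intro k
    have hid : IdentDistrib (W (k+1)) (W 1) P P := hW_ident (k+1) (by omega)
    exact (hid.comp hφ).lintegral_eq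
  have hbδ : ∀ k, ∫⁻ ω, b k ω ∂P ≤ ENNReal.ofReal δ := by
    intro k; rw [hbk k, hb1]; exact ENNReal.ofReal_le_ofReal hWc
  -- ∫⁻ g k = P (A k) * ∫⁻ b k
  have hgint : ∀ k, ∫⁻ ω, g k ω ∂P = P (A k) * ∫⁻ ω, b k ω ∂P := by
    intro k
    have := lintegral_mul_eq_lintegral_mul_lintegral_of_independent_measurableSpace
      (μ := P) (f := (A k).indicator (fun _ => (1:ℝ≥0∞))) (g := b k)
      (ℱ.le k) (hle k) (hindep k)
      (measurable_const.indicator (hAmeas k))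
      (hφ.comp (Measurable.of_comap_le le_rfl))
    simp only [hgdef]
    rw [this, show (fun _ : Ω => (1:ℝ≥0∞)) = 1 from rfl, lintegral_indicator_one (hAmeas' k)]
  -- tsum of indicators = τ
  have hindsum : ∀ ω, (∑' k, (A k).indicator (fun _ => (1:ℝ≥0∞)) ω) = (τ ω : ℝ≥0∞) := by
    intro ω
    have h1 : ∀ k ∈ Finset.range (τ ω), (A k).indicator (fun _ => (1:ℝ≥0∞)) ω = 1 := by
      intro k hk
      exact Set.indicator_of_mem (show ω ∈ A k from Finset.mem_range.1 hk) _
    have h2 : ∀ k ∉ Finset.range (τ ω), (A k).indicator (fun _ => (1:ℝ≥0∞)) ω = 0 := by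
      intro k hk
      exact Set.indicator_of_notMem (show ω ∉ A k by simpa [hAdef] using hk) _
    rw [tsum_eq_sum h2, Finset.sum_congr rfl h1]
    simp
  have hτlint : ∫⁻ ω, (τ ω : ℝ≥0∞) ∂P = ∑' k, P (A k) := by
    calc ∫⁻ ω, (τ ω : ℝ≥0∞) ∂P
        = ∫⁻ ω, ∑' k, (A k).indicator (fun _ => (1:ℝ≥0∞)) ω ∂P := by
          exact lintegral_congr fun ω => (hindsum ω).symm
      _ = ∑' k, ∫⁻ ω, (A k).indicator (fun _ => (1:ℝ≥0∞)) ω ∂P :=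
          lintegral_tsum fun k => (measurable_const.indicator (hAmeas' k)).aemeasurable
      _ = ∑' k, P (A k) := by
          exact tsum_congr fun k => lintegral_indicator_one (hAmeas' k)
  have hτofReal : ∫⁻ ω, (τ ω : ℝ≥0∞) ∂P = ENNReal.ofReal (∫ ω, (τ ω : ℝ) ∂P) := by
    rw [ofReal_integral_eq_lintegral_ofReal hτint
      (Filter.Eventually.of_forall fun ω => Nat.cast_nonneg _)]
    exact lintegral_congr fun ω => by rw [ENNReal.ofReal_natCast]
  -- main lintegral bound
  set F : Ω → ℝ := fun ω => max (M (τ ω) ω) c with hFdef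
  have hFnn : ∀ ω, 0 ≤ F ω := fun ω => le_trans hc.le (le_max_right _ _)
  have hFmeas : Measurable F := hSV.max measurable_const
  have hptwise : ∀ ω, ENNReal.ofReal (F ω) ≤ ENNReal.ofReal c + ∑' k, g k ω := by
    intro ω
    have h1 : ENNReal.ofReal (F ω) ≤
        ENNReal.ofReal c + ∑ k ∈ Finset.range (τ ω), b k ω := by
      calc ENNReal.ofReal (F ω)
          ≤ ENNReal.ofReal (c + ∑ k ∈ Finset.range (τ ω), max (W (k+1) ω - c) 0) :=
            ENNReal.ofReal_le_ofReal (key (τ ω) ω)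
        _ = ENNReal.ofReal c + ENNReal.ofReal (∑ k ∈ Finset.range (τ ω), max (W (k+1) ω - c) 0) :=
            ENNReal.ofReal_add hc.le (Finset.sum_nonneg fun k _ => le_max_right _ _)
        _ ≤ ENNReal.ofReal c + ∑ k ∈ Finset.range (τ ω), b k ω := by
            gcongr
            rw [ENNReal.ofReal_sum_of_nonneg (fun k _ => le_max_right _ _)]
    refine h1.trans (add_le_add_right ?_ _)
    calc ∑ k ∈ Finset.range (τ ω), b k ω
        = ∑ k ∈ Finset.range (τ ω), g k ω := by
          refine Finset.sum_congr rfl fun k hk => ?_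
          simp only [hgdef]
          rw [Set.indicator_of_mem (show ω ∈ A k from Finset.mem_range.1 hk), one_mul]
      _ ≤ ∑' k, g k ω := ENNReal.sum_le_tsum _
  have hlint : ∫⁻ ω, ENNReal.ofReal (F ω) ∂P ≤
      ENNReal.ofReal c + ENNReal.ofReal δ * ∫⁻ ω, (τ ω : ℝ≥0∞) ∂P := by
    calc ∫⁻ ω, ENNReal.ofReal (F ω) ∂P
        ≤ ∫⁻ ω, (ENNReal.ofReal c + ∑' k, g k ω) ∂P := lintegral_mono hptwise
      _ = ENNReal.ofReal c + ∫⁻ ω, ∑' k, g k ω ∂P := by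
          rw [lintegral_add_left measurable_const, lintegral_const, measure_univ, mul_one]
      _ = ENNReal.ofReal c + ∑' k, ∫⁻ ω, g k ω ∂P := by
          rw [lintegral_tsum fun k => (hgmeas k).aemeasurable]
      _ ≤ ENNReal.ofReal c + ∑' k, P (A k) * ENNReal.ofReal δ := by
          gcongr with k
          rw [hgint k]
          exact mul_le_mul_right (hbδ k) _
      _ = ENNReal.ofReal c + ENNReal.ofReal δ * ∑' k, P (A k) := by
          rw [ENNReal.tsum_mul_right, mul_comm]
      _ = ENNReal.ofReal c + ENNReal.ofReal δ * ∫⁻ ω, (τ ω : ℝ≥0∞) ∂P := by rw [hτlint]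
  set I : ℝ := ∫ ω, (τ ω : ℝ) ∂P with hIdef
  have hInn : 0 ≤ I := integral_nonneg fun ω => Nat.cast_nonneg _
  have hbound : ∫⁻ ω, ENNReal.ofReal (F ω) ∂P ≤ ENNReal.ofReal (δ * I + c) := by
    refine hlint.trans (le_of_eq ?_)
    rw [hτofReal, ← ENNReal.ofReal_mul hδ.le, ← ENNReal.ofReal_add hc.le (by positivity)]
    rw [ENNReal.ofReal_eq_ofReal_iff (by positivity) (by positivity)]
    ring
  have hFint : Integrable F P := by
    refine ⟨hFmeas.aestronglyMeasurable, ?_⟩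
    rw [hasFiniteIntegral_iff_norm]
    calc ∫⁻ ω, ENNReal.ofReal ‖F ω‖ ∂P
        = ∫⁻ ω, ENNReal.ofReal (F ω) ∂P := by
          exact lintegral_congr fun ω => by rw [Real.norm_of_nonneg (hFnn ω)]
      _ ≤ ENNReal.ofReal (δ * I + c) := hbound
      _ < ⊤ := ENNReal.ofReal_lt_top
  have hFle : ∫ ω, F ω ∂P ≤ δ * I + c := by
    rw [integral_eq_lintegral_of_nonneg_ae (Filter.Eventually.of_forall hFnn)
      hFmeas.aestronglyMeasurable]
    exact ENNReal.toReal_le_of_le_ofReal (by positivity) hbound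
  refine ⟨hFle, ?_⟩
  calc ∫ ω, M (τ ω) ω ∂P
      ≤ ∫ ω, F ω ∂P := by
        refine integral_mono_of_nonneg (Filter.Eventually.of_forall fun ω => hMnonneg _ ω)
          hFint (Filter.Eventually.of_forall fun ω => le_max_left _ _)
    _ ≤ δ * I + c := hFle
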